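/- Let b₂₀, a₃₁ ∈ ℝ with b₂₀ ≠ 0. Set Ã(x) = 1 − b₂₀²·(2 + a₃₁/b₂₀³)·x² − a₃₁·x³, B̃(x) = x + b₂₀·x², C̃(x) = −2·b₂₀ + b₂₀²·(4 + a₃₁/b₂₀³)·x + 2·a₃₁·x², and define f(x) = −(Ã′(x) − C̃(x))/Ã(x), g(x) = Ã(x)·B̃(x). Then there is a neighborhood of 0 on which g′(x) + f(x)·g(x) = 1 for all x. -/

import Mathlib

/-- Zero-Urabe-function isochronicity identity: with `Ã`, `B̃`, `C̃` as below and the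
Liénard data `f(x) = −(Ã′(x) − C̃(x))/Ã(x)`, `g(x) = Ã(x)·B̃(x)`, the identity
`g′(x) + f(x)·g(x) = 1` holds on a neighborhood of `0`. -/
theorem stmt_11 (b20 a31 : ℝ) (hb20 : b20 ≠ 0) (A B C f g : ℝ → ℝ)
    (hA : ∀ x : ℝ, A x = 1 - b20^2*(2 + a31/b20^3)*x^2 - a31*x^3)
    (hB : ∀ x : ℝ, B x = x + b20*x^2)
    (hC : ∀ x : ℝ, C x = -2*b20 + b20^2*(4 + a31/b20^3)*x + 2*a31*x^2)
    (hf : ∀ x : ℝ, f x = -(deriv A x - C x) / A x)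
    (hg : ∀ x : ℝ, g x = A x * B x) :
    ∃ ε > (0 : ℝ), ∀ x : ℝ, |x| < ε → deriv g x + f x * g x = 1 := by
  set c : ℝ := b20^2*(2 + a31/b20^3) with hc
  have hAfun : A = fun x => 1 - c*x^2 - a31*x^3 := funext fun x => by rw [hA]
  have hBfun : B = fun x => x + b20*x^2 := funext fun x => by rw [hB]
  have hAder : ∀ x : ℝ, HasDerivAt A (-(c*(2*x)) - a31*(3*x^2)) x := by
    intro x
    rw [hAfun]
    have h1 := (hasDerivAt_pow 2 x).const_mul c
    have h2 := (hasDerivAt_pow 3 x).const_mul a31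
    have := ((hasDerivAt_const x (1:ℝ)).sub h1).sub h2
    simpa [Pi.sub_def, mul_comm, mul_assoc, mul_left_comm] using this
  have hBder : ∀ x : ℝ, HasDerivAt B (1 + b20*(2*x)) x := by
    intro x
    rw [hBfun]
    have h1 := (hasDerivAt_pow 2 x).const_mul b20
    have := (hasDerivAt_id x).add h1
    simpa [Pi.add_def, mul_comm, mul_assoc, mul_left_comm] using this
  have hgfun : g = fun x => A x * B x := funext fun x => hg x
  have hgder : ∀ x : ℝ, deriv g x =
      (-(c*(2*x)) - a31*(3*x^2)) * B x + A x * (1 + b20*(2*x)) := by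
    intro x
    rw [hgfun]
    exact ((hAder x).mul (hBder x)).deriv
  -- neighborhood where A ≠ 0
  have hAcont : Continuous A := by
    rw [hAfun]; fun_prop
  have hA0 : A 0 = 1 := by simp [hA]
  have hne : ∀ᶠ x in nhds (0:ℝ), A x ≠ 0 := by
    have : ∀ᶠ x in nhds (0:ℝ), A x ∈ Set.Ioi (0:ℝ) := by
      apply hAcont.continuousAt.eventually_mem
      rw [hA0]; exact Ioi_mem_nhds one_pos
    exact this.mono fun x hx => ne_of_gt hx
  obtain ⟨ε, hε, hball⟩ := Metric.eventually_nhds_iff_ball.mp hne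
  refine ⟨ε, hε, fun x hx => ?_⟩
  have hAx : A x ≠ 0 := hball x (by simpa [Real.dist_eq] using hx)
  have hdA : deriv A x = -(c*(2*x)) - a31*(3*x^2) := (hAder x).deriv
  rw [hgder, hf, hdA, hg]
  have hcancel : -((-(c*(2*x)) - a31*(3*x^2)) - C x) / A x * (A x * B x)
      = -((-(c*(2*x)) - a31*(3*x^2)) - C x) * B x := by
    field_simp
  rw [hcancel]
  have hb3 : b20^3 ≠ 0 := pow_ne_zero _ hb20
  rw [hA x, hB, hC, hc]
  field_simp
  ring
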